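/- Let L/k be a finite Galois extension (char k ≠ 2) such that every element of k^× is a square in L. Then the Dress map h_{L/k} : A(Gal(L/k)) → GW(k) is surjective. -/

import Mathlib

/-- The relations ideal defining the Grothendieck–Witt ring of a field `k`
(characteristic ≠ 2) by its standard presentation: generators `⟨a⟩` for
`a ∈ kˣ` (multiplicative via the group algebra), with relations
`⟨a²⟩ = 1` and the chain relation `⟨a⟩ + ⟨b⟩ = ⟨a+b⟩ + ⟨(a+b)ab⟩` when `a + b ≠ 0`. -/
noncomputable def GWIdeal (k : Type) [Field k] : Ideal (MonoidAlgebra ℤ kˣ) :=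
  Ideal.span { x | (∃ a : kˣ, x = MonoidAlgebra.of ℤ kˣ (a * a) - 1) ∨
    (∃ a b c : kˣ, ((a : k) + (b : k) = (c : k)) ∧
      x = MonoidAlgebra.of ℤ kˣ a + MonoidAlgebra.of ℤ kˣ b
        - MonoidAlgebra.of ℤ kˣ c - MonoidAlgebra.of ℤ kˣ (c * a * b)) }

/-- The Grothendieck–Witt ring of a field `k` of characteristic ≠ 2. -/
def GW (k : Type) [Field k] : Type := MonoidAlgebra ℤ kˣ ⧸ GWIdeal k

noncomputable instance (k : Type) [Field k] : CommRing (GW k) :=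
  Ideal.Quotient.commRing (GWIdeal k)

/-- The class `⟨a⟩` of the one-dimensional quadratic form `x ↦ a x²` in `GW k`. -/
noncomputable def GWform (k : Type) [Field k] (a : kˣ) : GW k :=
  Ideal.Quotient.mk (GWIdeal k) (MonoidAlgebra.of ℤ kˣ a)


open scoped Classical in
/-- The "mark vector" of the `G`-set `G/H`: the function sending a subgroup `K` to
the number of `K`-fixed points of `G/H`. -/
noncomputable def mark {G : Type} [Group G] (H : Subgroup G) : Subgroup G → ℤ :=
  fun K => (Nat.card (MulAction.fixedPoints K (G ⧸ H)) : ℤ)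

/-- The Burnside ring `A(G)` of a finite group `G`, realized via the (injective) mark
homomorphism as the subring of `∏_{K ≤ G} ℤ` generated by the marks of the transitive
`G`-sets `G/H`. -/
noncomputable def BurnsideRing (G : Type) [Group G] : Subring (Subgroup G → ℤ) :=
  Subring.closure (Set.range (mark (G := G)))

/-- The basis element `[G/H]` of the Burnside ring `A(G)`. -/
noncomputable def burnsideElt {G : Type} [Group G] (H : Subgroup G) : BurnsideRing G :=
  ⟨mark H, Subring.subset_closure ⟨H, rfl⟩⟩

/-- `x ∈ GW k` is the class of the quadratic form `q`: `q` is isometric to a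
diagonal form `⟨d₁, …, d_m⟩` and `x = ⟨d₁⟩ + ⋯ + ⟨d_m⟩`. -/
def IsGWClassOf (k : Type) [Field k] {V : Type} [AddCommGroup V] [Module k V]
    (q : QuadraticForm k V) (x : GW k) : Prop :=
  ∃ (m : ℕ) (d : Fin m → kˣ),
    QuadraticMap.Equivalent q (QuadraticMap.weightedSumSquares k fun i => (d i : k)) ∧
    x = ∑ i, GWform k (d i)

/-- `h` is the Dress map `A(G) → GW(k)` of the Galois extension `L/k`:
the ring homomorphism sending the class `[G/H]` to the class in `GW(k)` of the trace
form `x ↦ tr_{L^H/k}(x²)` of the fixed field `L^H`. -/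
def IsDressMap (k L : Type) [Field k] [Field L] [Algebra k L]
    (h : BurnsideRing (L ≃ₐ[k] L) →+* GW k) : Prop :=
  ∀ H : Subgroup (L ≃ₐ[k] L),
    IsGWClassOf k (Algebra.traceForm k (IntermediateField.fixedField H)).toQuadraticMap
      (h (burnsideElt H))

/-! ### Auxiliary lemmas about `GW k` -/

section GWLemmas

variable {k : Type} [Field k]

lemma gw_one : GWform k 1 = 1 := by
  unfold GWform
  rw [map_one, map_one]
  exact rfl

lemma gw_mul (a b : kˣ) : GWform k (a * b) = GWform k a * GWform k b := by
  unfold GWform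
  rw [map_mul, map_mul]
  exact rfl

lemma gw_sq (u c : kˣ) : GWform k (u * (c * c)) = GWform k u := by
  have hmem : MonoidAlgebra.of ℤ kˣ u * (MonoidAlgebra.of ℤ kˣ (c * c) - 1) ∈ GWIdeal k :=
    Ideal.mul_mem_left _ _ (Ideal.subset_span (Or.inl ⟨c, rfl⟩))
  have h0 : GWform k (u * (c * c)) - GWform k u = 0 := by
    unfold GWform
    change (Ideal.Quotient.mk (GWIdeal k) (MonoidAlgebra.of ℤ kˣ (u * (c * c)))
      - Ideal.Quotient.mk (GWIdeal k) (MonoidAlgebra.of ℤ kˣ u) : MonoidAlgebra ℤ kˣ ⧸ GWIdeal k) = 0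
    rw [← map_sub (Ideal.Quotient.mk (GWIdeal k)), Ideal.Quotient.eq_zero_iff_mem]
    convert hmem using 1
    rw [map_mul]; ring
  exact sub_eq_zero.mp h0

lemma gw_chain (A B C : kˣ) (hsum : (A : k) + (B : k) = (C : k)) :
    GWform k A + GWform k B = GWform k C + GWform k (C * A * B) := by
  have hmem : (MonoidAlgebra.of ℤ kˣ A + MonoidAlgebra.of ℤ kˣ B
      - MonoidAlgebra.of ℤ kˣ C - MonoidAlgebra.of ℤ kˣ (C * A * B)) ∈ GWIdeal k :=
    Ideal.subset_span (Or.inr ⟨A, B, C, hsum, rfl⟩)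
  have h0 : GWform k A + GWform k B - GWform k C - GWform k (C * A * B) = 0 := by
    unfold GWform
    change (Ideal.Quotient.mk (GWIdeal k) (MonoidAlgebra.of ℤ kˣ A)
      + Ideal.Quotient.mk (GWIdeal k) (MonoidAlgebra.of ℤ kˣ B)
      - Ideal.Quotient.mk (GWIdeal k) (MonoidAlgebra.of ℤ kˣ C)
      - Ideal.Quotient.mk (GWIdeal k) (MonoidAlgebra.of ℤ kˣ (C * A * B))
      : MonoidAlgebra ℤ kˣ ⧸ GWIdeal k) = 0
    rw [← map_add (Ideal.Quotient.mk (GWIdeal k)), ← map_sub (Ideal.Quotient.mk (GWIdeal k)),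
      ← map_sub (Ideal.Quotient.mk (GWIdeal k)), Ideal.Quotient.eq_zero_iff_mem]
    exact hmem
  linear_combination h0

lemma gw_binary (p q r s : kˣ) (c0 b0 c1 b1 : k)
    (hr : (r : k) = p * c0 ^ 2 + q * b0 ^ 2)
    (hs : (s : k) = p * c1 ^ 2 + q * b1 ^ 2)
    (ho : (p : k) * (c0 * c1) + (q : k) * (b0 * b1) = 0) :
    GWform k r + GWform k s = GWform k p + GWform k q := by
  set D : k := c0 * b1 - c1 * b0 with hD
  have key : (r : k) * s = (p : k) * q * D ^ 2 := by
    rw [hr, hs]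
    linear_combination ((p : k) * (c0 * c1) + (q : k) * (b0 * b1)) * ho
  have hDne : D ≠ 0 := by
    intro h0
    have hz : (r : k) * s = 0 := by rw [key, h0]; ring
    simp at hz
  set Du : kˣ := Units.mk0 D hDne with hDu
  have hDval : (Du : k) = D := rfl
  by_cases hc0 : c0 = 0
  · subst hc0
    have hb0 : b0 ≠ 0 := by
      intro hb
      exact r.ne_zero (by rw [hr, hb]; ring)
    set b0u : kˣ := Units.mk0 b0 hb0 with hb0u
    have hbval : (b0u : k) = b0 := rfl
    have h1 : r = q * (b0u * b0u) := by
      ext; push_cast [hbval]; rw [hr]; ring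
    have h2 : s * (b0u * b0u) = p * (Du * Du) := by
      ext; push_cast [hbval, hDval]
      refine mul_left_cancel₀ q.ne_zero ?_
      linear_combination key - (s : k) * hr
    have h3 : GWform k s = GWform k p := by
      calc GWform k s = GWform k (s * (b0u * b0u)) := (gw_sq s b0u).symm
        _ = GWform k (p * (Du * Du)) := by rw [h2]
        _ = GWform k p := gw_sq p Du
    rw [h1, gw_sq, h3, add_comm]
  · by_cases hb0 : b0 = 0
    · subst hb0
      set c0u : kˣ := Units.mk0 c0 hc0 with hc0u
      have hcval : (c0u : k) = c0 := rfl
      have h1 : r = p * (c0u * c0u) := by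
        ext; push_cast [hcval]; rw [hr]; ring
      have h2 : s * (c0u * c0u) = q * (Du * Du) := by
        ext; push_cast [hcval, hDval]
        refine mul_left_cancel₀ p.ne_zero ?_
        linear_combination key - (s : k) * hr
      have h3 : GWform k s = GWform k q := by
        calc GWform k s = GWform k (s * (c0u * c0u)) := (gw_sq s c0u).symm
          _ = GWform k (q * (Du * Du)) := by rw [h2]
          _ = GWform k q := gw_sq q Du
      rw [h1, gw_sq, h3]
    · set c0u : kˣ := Units.mk0 c0 hc0 with hc0u
      set b0u : kˣ := Units.mk0 b0 hb0 with hb0u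
      have hcval : (c0u : k) = c0 := rfl
      have hbval : (b0u : k) = b0 := rfl
      have hchain := gw_chain (p * (c0u * c0u)) (q * (b0u * b0u)) r
        (by push_cast [hcval, hbval]; rw [hr]; ring)
      rw [gw_sq, gw_sq] at hchain
      have hCAB : (r * (p * (c0u * c0u)) * (q * (b0u * b0u)) : kˣ)
          = (r * p * q) * ((c0u * b0u) * (c0u * b0u)) := by
        ext; push_cast [hcval, hbval]; ring
      rw [hCAB, gw_sq] at hchain
      have h3 : GWform k s = GWform k (r * p * q) := by
        have h2 : s * ((r * r) : kˣ) = (r * p * q) * (Du * Du) := by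
          ext; push_cast [hDval]
          linear_combination (r : k) * key
        calc GWform k s = GWform k (s * (r * r)) := (gw_sq s r).symm
          _ = GWform k ((r * p * q) * (Du * Du)) := by rw [h2]
          _ = GWform k (r * p * q) := gw_sq _ Du
      rw [h3, ← hchain]

end GWLemmas

open Polynomial IntermediateField

/-- The main geometric input: for `a` a non-square unit of `k` with a square root in `L`,
the element `⟨2⟩ + ⟨2a⟩` lies in the image of the Dress map. -/
lemma gw_trace_elt (k L : Type) [Field k] [Field L] [Algebra k L]
    [FiniteDimensional k L] [IsGalois k L] (h2 : (2 : k) ≠ 0)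
    (h : BurnsideRing (L ≃ₐ[k] L) →+* GW k) (hD : IsDressMap k L h)
    (a : kˣ) (hns : ∀ b : k, b * b ≠ (a : k)) (x : L)
    (hx : x ^ 2 = algebraMap k L (a : k)) :
    GWform k (Units.mk0 2 h2) + GWform k (Units.mk0 2 h2 * a) ∈ h.range := by
  have hxint : IsIntegral k x := Algebra.IsIntegral.isIntegral x
  have hirr : Irreducible (X ^ 2 - C (a : k)) :=
    X_pow_sub_C_irreducible_of_prime Nat.prime_two (fun b hb => hns b (by rw [← hb]; ring))
  have hmin : minpoly k x = X ^ 2 - C (a : k) := by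
    refine (minpoly.eq_of_irreducible_of_monic hirr ?_ (monic_X_pow_sub_C _ two_ne_zero)).symm
    simp [hx]
  have hfr : Module.finrank k k⟮x⟯ = 2 := by
    rw [IntermediateField.adjoin.finrank hxint, hmin, natDegree_X_pow_sub_C]
  set g : k⟮x⟯ := AdjoinSimple.gen k x with hg
  have hg2 : g ^ 2 = algebraMap k k⟮x⟯ (a : k) := by
    have h1 : ((g ^ 2 : k⟮x⟯) : L) = ((algebraMap k k⟮x⟯ (a : k) : k⟮x⟯) : L) := by
      push_cast
      rw [AdjoinSimple.coe_gen, hx]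
    exact Subtype.ext h1
  have htr1 : ∀ c : k, Algebra.trace k k⟮x⟯ (algebraMap k k⟮x⟯ c) = 2 * c := by
    intro c
    rw [Algebra.trace_algebraMap, hfr]
    push_cast
    ring
  set pb : PowerBasis k k⟮x⟯ := IntermediateField.adjoin.powerBasis hxint with hpb
  have htrg : Algebra.trace k k⟮x⟯ g = 0 := by
    have h4 := (IntermediateField.adjoin.powerBasis hxint).trace_gen_eq_nextCoeff_minpoly
    rw [IntermediateField.adjoin.powerBasis_gen] at h4
    rw [h4, IntermediateField.minpoly_gen, hmin]
    have h5 : ((X : k[X]) ^ 2 - C (a : k)).nextCoeff = 0 := by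
      rw [nextCoeff_of_natDegree_pos (by rw [natDegree_X_pow_sub_C]; norm_num),
        natDegree_X_pow_sub_C]
      simp [coeff_X_pow]
    rw [h5, neg_zero]
  have decomp : ∀ v : k⟮x⟯, ∃ c b : k, v = algebraMap k k⟮x⟯ c + algebraMap k k⟮x⟯ b * g := by
    intro v
    have hdim : pb.dim = 2 := by
      rw [hpb, IntermediateField.adjoin.powerBasis_dim, hmin, natDegree_X_pow_sub_C]
    set B := pb.basis.reindex (finCongr hdim) with hB
    have hrep := B.sum_repr v
    rw [Fin.sum_univ_two] at hrep
    refine ⟨B.repr v 0, B.repr v 1, ?_⟩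
    have hB0 : B 0 = 1 := by
      rw [hB, Module.Basis.reindex_apply, pb.basis_eq_pow]
      simp
    have hB1 : B 1 = g := by
      rw [hB, Module.Basis.reindex_apply, pb.basis_eq_pow]
      simp [hpb, Fin.coe_cast, hg]
    rw [hB0, hB1] at hrep
    conv_lhs => rw [← hrep]
    rw [Algebra.smul_def, Algebra.smul_def, mul_one]
  have trmul : ∀ c0 b0 c1 b1 : k,
      Algebra.trace k k⟮x⟯ ((algebraMap k k⟮x⟯ c0 + algebraMap k k⟮x⟯ b0 * g) *
        (algebraMap k k⟮x⟯ c1 + algebraMap k k⟮x⟯ b1 * g))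
      = 2 * (c0 * c1 + (a : k) * (b0 * b1)) := by
    intro c0 b0 c1 b1
    have hprod : (algebraMap k k⟮x⟯ c0 + algebraMap k k⟮x⟯ b0 * g) *
        (algebraMap k k⟮x⟯ c1 + algebraMap k k⟮x⟯ b1 * g)
        = algebraMap k k⟮x⟯ (c0 * c1 + (a : k) * (b0 * b1))
          + algebraMap k k⟮x⟯ (c0 * b1 + c1 * b0) * g := by
      simp only [map_add, map_mul]
      linear_combination (algebraMap k k⟮x⟯ b0 * algebraMap k k⟮x⟯ b1) * hg2
    rw [hprod, map_add, ← Algebra.smul_def, map_smul, htrg, smul_zero, add_zero, htr1]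
  -- apply the Dress hypothesis at the fixing subgroup of k⟮x⟯
  have hH := hD (IntermediateField.fixingSubgroup k⟮x⟯)
  rw [IsGalois.fixedField_fixingSubgroup k⟮x⟯] at hH
  obtain ⟨m, d, ⟨e⟩, hsum⟩ := hH
  have hm : m = 2 := by
    have h6 := e.toLinearEquiv.finrank_eq
    rw [hfr, Module.finrank_pi, Fintype.card_fin] at h6
    omega
  subst hm
  set q' := QuadraticMap.weightedSumSquares k fun i : Fin 2 => (d i : k) with hq'
  have wq : ∀ i : Fin 2, q' (Pi.single i 1) = (d i : k) := by
    intro i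
    rw [hq', QuadraticMap.weightedSumSquares_apply]
    simp [Pi.single_apply]
  have wqsum : q' (Pi.single 0 1 + Pi.single 1 1) = (d 0 : k) + (d 1 : k) := by
    rw [hq', QuadraticMap.weightedSumSquares_apply]
    simp [Fin.sum_univ_two, Pi.single_apply]
  set v0 : k⟮x⟯ := e.symm (Pi.single 0 1) with hv0
  set v1 : k⟮x⟯ := e.symm (Pi.single 1 1) with hv1
  have hqval : ∀ z : (Fin 2 → k),
      Algebra.trace k k⟮x⟯ (e.symm z * e.symm z) = q' z := by
    intro z
    have := e.symm.map_app z
    rwa [LinearMap.BilinMap.toQuadraticMap_apply, Algebra.traceForm_apply] at this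
  obtain ⟨c0, b0, hc0⟩ := decomp v0
  obtain ⟨c1, b1, hc1⟩ := decomp v1
  have hd0 : (d 0 : k) = 2 * c0 ^ 2 + (2 * (a : k)) * b0 ^ 2 := by
    have := hqval (Pi.single 0 1)
    rw [← hv0, hc0, trmul, wq] at this
    linear_combination -this
  have hd1 : (d 1 : k) = 2 * c1 ^ 2 + (2 * (a : k)) * b1 ^ 2 := by
    have := hqval (Pi.single 1 1)
    rw [← hv1, hc1, trmul, wq] at this
    linear_combination -this
  have horth : 2 * (c0 * c1) + (2 * (a : k)) * (b0 * b1) = 0 := by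
    have hsumv : e.symm (Pi.single 0 1 + Pi.single 1 1) = v0 + v1 := by
      rw [hv0, hv1, map_add]
    have h7 := hqval (Pi.single 0 1 + Pi.single 1 1)
    rw [hsumv, wqsum] at h7
    have h8 : (v0 + v1 : k⟮x⟯) = algebraMap k k⟮x⟯ (c0 + c1) + algebraMap k k⟮x⟯ (b0 + b1) * g := by
      rw [hc0, hc1, map_add, map_add]; ring
    rw [h8, trmul] at h7
    have h9 : (2 : k) * (2 * (c0 * c1) + (2 * (a : k)) * (b0 * b1)) = 2 * 0 := by
      linear_combination h7 + hd0 + hd1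
    exact mul_left_cancel₀ h2 h9
  have hbin := gw_binary (Units.mk0 2 h2) (Units.mk0 2 h2 * a) (d 0) (d 1) c0 b0 c1 b1
    (by push_cast [Units.val_mk0]; linear_combination hd0)
    (by push_cast [Units.val_mk0]; linear_combination hd1)
    (by push_cast [Units.val_mk0]; linear_combination horth)
  refine ⟨burnsideElt (IntermediateField.fixingSubgroup k⟮x⟯), ?_⟩
  rw [Fin.sum_univ_two, hbin] at hsum
  exact hsum


/-- If `L/k` is a finite Galois extension (char `k` ≠ 2) such that every element of
`kˣ` is a square in `L`, then the Dress map `A(Gal(L/k)) → GW(k)` is surjective. -/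
theorem stmt16 (k L : Type) [Field k] [Field L] [Algebra k L]
    [FiniteDimensional k L] [IsGalois k L] (h2 : (2 : k) ≠ 0)
    (hqc : ∀ a : k, a ≠ 0 → ∃ x : L, x ^ 2 = algebraMap k L a)
    (h : BurnsideRing (L ≃ₐ[k] L) →+* GW k) (hD : IsDressMap k L h) :
    Function.Surjective h := by
  have hsq1 : ∀ a : kˣ, (∃ b : k, b * b = (a : k)) → GWform k a = 1 := by
    rintro a ⟨b, hb⟩
    have hbne : b ≠ 0 := by rintro rfl; exact a.ne_zero (by rw [← hb]; ring)
    set bu : kˣ := Units.mk0 b hbne with hbu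
    have hval : (bu : k) = b := rfl
    have ha : a = 1 * (bu * bu) := by ext; push_cast [hval]; rw [← hb]; ring
    rw [ha, gw_sq, gw_one]
  have htrace : ∀ a : kˣ, (¬ ∃ b : k, b * b = (a : k)) →
      GWform k (Units.mk0 2 h2) + GWform k (Units.mk0 2 h2 * a) ∈ h.range := by
    intro a hns
    obtain ⟨x, hx⟩ := hqc a a.ne_zero
    exact gw_trace_elt k L h2 h hD a (fun b hb => hns ⟨b, hb⟩) x hx
  have h2mem : GWform k (Units.mk0 2 h2) ∈ h.range := by
    by_cases hs : ∃ b : k, b * b = ((Units.mk0 2 h2 : kˣ) : k)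
    · rw [hsq1 _ hs]; exact one_mem _
    · have hmem := htrace _ hs
      have h4 : GWform k (Units.mk0 2 h2 * Units.mk0 2 h2) = 1 := by
        rw [show (Units.mk0 2 h2 * Units.mk0 2 h2 : kˣ)
            = 1 * (Units.mk0 2 h2 * Units.mk0 2 h2) from (one_mul _).symm, gw_sq, gw_one]
      rw [h4] at hmem
      have h5 := sub_mem hmem (one_mem h.range)
      simpa using h5
  have hkey : ∀ a : kˣ, GWform k a ∈ h.range := by
    intro a
    by_cases hs : ∃ b : k, b * b = (a : k)
    · rw [hsq1 a hs]; exact one_mem _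
    · have hmem := htrace a hs
      have h2a : GWform k (Units.mk0 2 h2 * a) ∈ h.range := by
        have h6 := sub_mem hmem h2mem; simpa using h6
      have h7 := mul_mem h2mem h2a
      rw [← gw_mul] at h7
      have heq : (Units.mk0 2 h2 * (Units.mk0 2 h2 * a) : kˣ)
          = a * (Units.mk0 2 h2 * Units.mk0 2 h2) := by ext; push_cast; ring
      rw [heq, gw_sq] at h7
      exact h7
  have main : ∀ y : MonoidAlgebra ℤ kˣ, Ideal.Quotient.mk (GWIdeal k) y ∈ h.range := by
    intro y
    induction y using MonoidAlgebra.induction_linear with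
    | zero => rw [map_zero]; exact zero_mem _
    | add f g hf hg => rw [map_add]; exact add_mem hf hg
    | single a b =>
      have hsingle : (MonoidAlgebra.single a b : MonoidAlgebra ℤ kˣ)
          = b • MonoidAlgebra.of ℤ kˣ a := by
        rw [MonoidAlgebra.of_apply, MonoidAlgebra.smul_single]; simp
      rw [hsingle, map_zsmul]
      exact zsmul_mem (hkey a) b
  intro z
  obtain ⟨y, rfl⟩ := Ideal.Quotient.mk_surjective (I := GWIdeal k) z
  exact RingHom.mem_range.mp (main y)
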